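/- If l is a nondecreasing word of length n representing the positive braid P ∈ B₃⁺, then there exists a nondecreasing word l′ of length n representing the right complement P*; in particular P* ∈ B₃⁺ and e(P*) = e(P). -/

import Mathlib

namespace Braid

/-- Relations of the dual (band-generator) presentation of the 3-braid group:
`a (i+1) * a i = a (i+2) * a (i+1)` for all `i : ZMod 3`. -/
def braidRels : Set (FreeGroup (ZMod 3)) :=
  { r | ∃ i : ZMod 3,
      r = FreeGroup.of (i + 1) * FreeGroup.of i *
          (FreeGroup.of (i + 2) * FreeGroup.of (i + 1))⁻¹ }

/-- The 3-braid group with the band-generator presentation. -/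
abbrev B3 := PresentedGroup braidRels

/-- The band generators `a i`, `i : ZMod 3`. -/
def a (i : ZMod 3) : B3 := PresentedGroup.of i

/-- The fundamental element `δ = a₂ * a₁`. -/
def δ : B3 := a 2 * a 1

/-- The submonoid of positive braids. -/
def Pos : Submonoid B3 := Submonoid.closure (Set.range a)

/-- The exponent-sum homomorphism, sending each generator to `1 : ℤ`. -/
def eHom : B3 →* Multiplicative ℤ :=
  PresentedGroup.toGroup (f := fun _ => Multiplicative.ofAdd (1 : ℤ)) (by
    rintro r ⟨i, rfl⟩
    simp only [map_mul, map_inv, FreeGroup.lift_apply_of]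
    group)

/-- The exponent sum (letter length on positive braids) as an integer. -/
def elen (x : B3) : ℤ := Multiplicative.toAdd (eHom x)

/-- The right complement `X* = X⁻¹ * δ^{e(X)}`. -/
def rc (X : B3) : B3 := X⁻¹ * δ ^ elen X

/-- The `n`-th power of the rotation automorphism `τ`: `τ^n (x) = δ^{-n} * x * δ^n`. -/
def tauPow (n : ℤ) (x : B3) : B3 := δ ^ (-n) * x * δ ^ n

/-- The positive braid represented by a list of generator indices. -/
def wordProd (l : List (ZMod 3)) : B3 := (l.map a).prod

/-- A word is nondecreasing if each letter index is the previous one or the previous one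
plus `1` (mod 3). -/
def NDWord (l : List (ZMod 3)) : Prop :=
  l.Chain' (fun x y => y = x ∨ y = x + 1)

/-- The syllable number of a word: the number of maximal constant blocks. -/
def syl : List (ZMod 3) → ℕ
  | [] => 0
  | [_] => 1
  | x :: y :: t => (if x = y then 0 else 1) + syl (y :: t)

/-- The permutations underlying the band generators. -/
def perm3 (i : ZMod 3) : Equiv.Perm (Fin 3) :=
  if i = 0 then Equiv.swap 0 2 else if i = 1 then Equiv.swap 0 1 else Equiv.swap 1 2

lemma perm3_rel : ∀ i : ZMod 3,
    perm3 (i + 1) * perm3 i * (perm3 (i + 2) * perm3 (i + 1))⁻¹ = 1 := by decide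

/-- The homomorphism to the symmetric group on 3 letters (underlying permutation). -/
def permOf : B3 →* Equiv.Perm (Fin 3) :=
  PresentedGroup.toGroup (f := perm3) (by
    rintro r ⟨i, rfl⟩
    simp only [map_mul, map_inv, FreeGroup.lift_apply_of]
    exact perm3_rel i)

/-- The set of band generators and their inverses. -/
def genSet : Set B3 := Set.range a ∪ Set.range (fun i => (a i)⁻¹)

/-- The band-generator word length of a 3-braid. -/
noncomputable def wordLen (x : B3) : ℕ :=
  sInf { n | ∃ s : List B3, s.length = n ∧ (∀ g ∈ s, g ∈ genSet) ∧ s.prod = x }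

/-- The minimal band-generator word length in the conjugacy class. -/
noncomputable def minConjLen (x : B3) : ℕ :=
  sInf { n | ∃ y, IsConj x y ∧ wordLen y = n }

/-- `α` is a summit element with summit exponent `u` if `δ^{-u} * α` is positive and `u` is
the maximal such exponent over the conjugacy class. -/
def IsSummit (α : B3) (u : ℤ) : Prop :=
  δ ^ (-u) * α ∈ Pos ∧ ∀ β : B3, IsConj α β → ∀ v : ℤ, δ ^ (-v) * β ∈ Pos → v ≤ u


section Aux

lemma braid_rel (i : ZMod 3) : a (i + 1) * a i = a (i + 2) * a (i + 1) := by
  have h : (QuotientGroup.mk' (Subgroup.normalClosure braidRels)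
      (FreeGroup.of (i + 1) * FreeGroup.of i *
      (FreeGroup.of (i + 2) * FreeGroup.of (i + 1))⁻¹) : B3) = 1 := by
    rw [QuotientGroup.mk'_apply, QuotientGroup.eq_one_iff]
    exact Subgroup.subset_normalClosure ⟨i, rfl⟩
  have h2 : a (i + 1) * a i * (a (i + 2) * a (i + 1))⁻¹ = 1 := by
    simp only [map_mul, map_inv] at h; exact h
  exact mul_inv_eq_one.mp h2

lemma delta_eq (i : ZMod 3) : a (i + 1) * a i = δ := by
  have h0 := braid_rel 0
  have h1 := braid_rel 1
  have h2 := braid_rel 2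
  norm_num at h0 h1 h2
  have e : ∀ j : ZMod 3, j = 0 ∨ j = 1 ∨ j = 2 := by decide
  have t0 : (0:ZMod 3) + 1 = 1 := by decide
  have t1 : (1:ZMod 3) + 1 = 2 := by decide
  have t2 : (2:ZMod 3) + 1 = 0 := by decide
  have t3 : (1:ZMod 3) + 2 = 0 := by decide
  rcases e i with rfl | rfl | rfl
  · have := braid_rel 0; rw [t0, zero_add] at this; rw [t0]; exact this
  · rw [t1]; rfl
  · have := braid_rel 1; rw [t1, t3] at this; rw [t2]; exact this.symm

lemma a_inv_delta (i : ZMod 3) : (a i)⁻¹ * δ = a (i + 2) := by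
  have h : a (i + 2 + 1) * a (i + 2) = δ := delta_eq (i + 2)
  have h3 : i + 2 + 1 = i := by ring_nf; rw [show (3 : ZMod 3) = 0 from rfl]; ring
  rw [h3] at h
  rw [← h]; group

lemma a_mul_delta (i : ZMod 3) : a i * δ = δ * a (i + 1) := by
  have h1 : δ = a i * a (i + 2) := by
    have := delta_eq (i + 2)
    have h3 : i + 2 + 1 = i := by ring_nf; rw [show (3 : ZMod 3) = 0 from rfl]; ring
    rw [h3] at this; exact this.symm
  have h2 : a (i + 2) * a (i + 1) = δ := by
    have := delta_eq (i + 1)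
    rwa [show i + 1 + 1 = i + 2 by ring] at this
  calc a i * δ = a i * (a (i + 2) * a (i + 1)) := by rw [h2]
    _ = (a i * a (i + 2)) * a (i + 1) := by group
    _ = δ * a (i + 1) := by rw [← h1]

lemma a_mul_delta_pow (i : ZMod 3) (n : ℕ) : a i * δ ^ n = δ ^ n * a (i + n) := by
  induction n generalizing i with
  | zero => simp
  | succ n ih =>
    have : a i * δ ^ (n + 1) = (a i * δ) * δ ^ n := by rw [pow_succ]; group
    rw [this, a_mul_delta, mul_assoc, ih, pow_succ]
    push_cast
    group

lemma elen_a (i : ZMod 3) : elen (a i) = 1 := by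
  simp [elen, eHom, a, PresentedGroup.toGroup.of]

lemma elen_mul (x y : B3) : elen (x * y) = elen x + elen y := by
  simp [elen, map_mul]

/-- The complement word. -/
def compWord : List (ZMod 3) → List (ZMod 3)
  | [] => []
  | i :: t => compWord t ++ [i + 2 + (t.length : ZMod 3)]

lemma compWord_length (l : List (ZMod 3)) : (compWord l).length = l.length := by
  induction l with
  | nil => rfl
  | cons i t ih => simp [compWord, ih]

lemma elen_wordProd (l : List (ZMod 3)) : elen (wordProd l) = (l.length : ℤ) := by
  induction l with
  | nil => simp [wordProd, elen]
  | cons i t ih =>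
    have : wordProd (i :: t) = a i * wordProd t := by simp [wordProd]
    rw [this, elen_mul, elen_a, ih, List.length_cons]
    push_cast
    ring

lemma wordProd_compWord (l : List (ZMod 3)) : wordProd (compWord l) = rc (wordProd l) := by
  induction l with
  | nil => simp [compWord, wordProd, rc, elen]
  | cons i t ih =>
    have hP : wordProd (i :: t) = a i * wordProd t := by simp [wordProd]
    have hlen : elen (wordProd (i :: t)) = ((t.length : ℤ) + 1) := by
      rw [elen_wordProd, List.length_cons]; push_cast; ring
    have hlent : elen (wordProd t) = (t.length : ℤ) := elen_wordProd t
    have hpow : δ ^ ((t.length : ℤ) + 1) = δ * δ ^ (t.length : ℕ) := by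
      rw [show ((t.length : ℤ) + 1) = ((t.length + 1 : ℕ) : ℤ) by push_cast; ring,
        zpow_natCast, pow_succ]
      group
    have key : rc (wordProd (i :: t)) = rc (wordProd t) * a (i + 2 + (t.length : ZMod 3)) := by
      rw [rc, hlen, hP, hpow, mul_inv_rev]
      rw [show (wordProd t)⁻¹ * (a i)⁻¹ * (δ * δ ^ (t.length : ℕ))
          = (wordProd t)⁻¹ * (((a i)⁻¹ * δ) * δ ^ (t.length : ℕ)) by group]
      rw [a_inv_delta, a_mul_delta_pow, rc, hlent, ← zpow_natCast δ t.length]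
      group
    rw [key, ← ih]
    simp [compWord, wordProd]

lemma compWord_getLast? (i : ZMod 3) (t : List (ZMod 3)) :
    (compWord (i :: t)).getLast? = some (i + 2 + (t.length : ZMod 3)) := by
  simp [compWord]

lemma compWord_nd (l : List (ZMod 3)) (hl : NDWord l) : NDWord (compWord l) := by
  induction l with
  | nil => exact List.isChain_nil
  | cons i t ih =>
    cases t with
    | nil => simp [compWord, NDWord]; exact List.isChain_singleton _
    | cons j s =>
      have h1 : j = i ∨ j = i + 1 := hl.rel_head
      have h2 : NDWord (j :: s) := hl.tail
      have ihh := ih h2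
      show List.Chain' _ (compWord (j :: s) ++ [i + 2 + (((j :: s).length : ℕ) : ZMod 3)])
      refine List.isChain_append.mpr ?_
      refine ⟨ihh, List.isChain_singleton _, ?_⟩
      intro x hx y hy
      rw [compWord_getLast? j s] at hx
      simp only [List.head?_cons, Option.mem_def, Option.some.injEq] at hx hy
      subst hx; subst hy
      rcases h1 with h | h
      · right; subst h; push_cast [List.length_cons]; ring
      · left; subst h; push_cast [List.length_cons]; ring

end Aux

/-- Lemma 2.2(v): if `P` is a nondecreasing positive word, then so is `P*`, with `|P*| = |P|`. -/
theorem rc_ndword (l : List (ZMod 3)) (hl : NDWord l) :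
    (∃ l' : List (ZMod 3), NDWord l' ∧ l'.length = l.length ∧
        wordProd l' = rc (wordProd l)) ∧
    rc (wordProd l) ∈ Pos ∧ elen (rc (wordProd l)) = elen (wordProd l) := by
  refine ⟨⟨compWord l, compWord_nd l hl, compWord_length l, wordProd_compWord l⟩, ?_, ?_⟩
  · rw [← wordProd_compWord]
    apply list_prod_mem
    intro x hx
    simp only [wordProd, List.mem_map] at hx
    obtain ⟨i, _, rfl⟩ := hx
    exact Submonoid.subset_closure ⟨i, rfl⟩
  · rw [← wordProd_compWord, elen_wordProd, elen_wordProd, compWord_length]
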